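/- Let n = pq with p, q distinct primes, let e be coprime to φ(n), and let k be a positive integer. Define T_{n,e,k} = {x ∈ Z_n* : x^(e^k) ≡ x (mod n), and x^(e^j) ≢ x (mod n) for all positive j < k}. Then |T_{n,e,k}| = Σ_{d | k} μ(k/d) · gcd(e^d − 1, p − 1) · gcd(e^d − 1, q − 1). -/

import Mathlib

open Finset

lemma aux_card_pow_eq_one_gcd (G : Type*) [Group G] [Fintype G] [IsCyclic G] (m : ℕ) :
    Nat.card {x : G // x ^ m = 1} = Nat.gcd m (Fintype.card G) := by
  classical
  rw [Nat.card_eq_fintype_card, Fintype.card_subtype]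
  rcases Nat.eq_zero_or_pos m with rfl | hm
  · simp [Finset.filter_true_of_mem, Nat.gcd_zero_left]
  · set d := Nat.gcd m (Fintype.card G) with hd
    have hd0 : d ≠ 0 := Nat.ne_of_gt (Nat.gcd_pos_of_pos_left _ hm)
    have hdvd : d ∣ Fintype.card G := Nat.gcd_dvd_right _ _
    have hfe : (Finset.univ.filter fun x : G => x ^ m = 1)
        = Finset.univ.filter fun x : G => x ^ d = 1 := by
      ext x
      simp only [Finset.mem_filter, Finset.mem_univ, true_and, ← orderOf_dvd_iff_pow_eq_one]
      exact ⟨fun h => Nat.dvd_gcd h orderOf_dvd_card, fun h => h.trans (Nat.gcd_dvd_left _ _)⟩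
    rw [hfe, ← sum_card_orderOf_eq_card_pow_eq_one (G := G) hd0]
    conv_rhs => rw [← Nat.sum_totient d]
    refine Finset.sum_congr rfl fun i hi => ?_
    exact IsCyclic.card_orderOf_eq_totient ((Nat.mem_divisors.mp hi).1.trans hdvd)

lemma aux_card_pow_eq_one_prod (G H : Type*) [Group G] [Group H] (m : ℕ) :
    Nat.card {x : G × H // x ^ m = 1} =
      Nat.card {x : G // x ^ m = 1} * Nat.card {y : H // y ^ m = 1} := by
  rw [← Nat.card_prod]
  refine Nat.card_congr ⟨fun z => (⟨z.1.1, ?_⟩, ⟨z.1.2, ?_⟩),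
    fun z => ⟨(z.1.1, z.2.1), ?_⟩, fun z => rfl, fun z => rfl⟩
  · exact congrArg Prod.fst z.2
  · exact congrArg Prod.snd z.2
  · exact Prod.ext z.1.2 z.2.2

lemma aux_card_pow_eq_one_congr {G H : Type*} [Group G] [Group H] (f : G ≃* H) (m : ℕ) :
    Nat.card {x : G // x ^ m = 1} = Nat.card {y : H // y ^ m = 1} :=
  Nat.card_congr (f.toEquiv.subtypeEquiv fun x => by
    show x ^ m = 1 ↔ f x ^ m = 1
    rw [← map_pow, map_eq_one_iff _ f.injective])

lemma aux_F_count (p q : ℕ) (hp : p.Prime) (hq : q.Prime) (hpq : p ≠ q) (m : ℕ) :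
    Nat.card {u : (ZMod (p * q))ˣ // u ^ m = 1} = Nat.gcd m (p - 1) * Nat.gcd m (q - 1) := by
  haveI := Fact.mk hp; haveI := Fact.mk hq
  have hco : Nat.Coprime p q := (Nat.coprime_primes hp hq).mpr hpq
  haveI : NeZero (p * q) := ⟨Nat.mul_ne_zero hp.pos.ne' hq.pos.ne'⟩
  have e1 : (ZMod (p * q))ˣ ≃* (ZMod p)ˣ × (ZMod q)ˣ :=
    (Units.mapEquiv (ZMod.chineseRemainder hco).toMulEquiv).trans MulEquiv.prodUnits
  rw [aux_card_pow_eq_one_congr e1 m, aux_card_pow_eq_one_prod,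
    aux_card_pow_eq_one_gcd, aux_card_pow_eq_one_gcd,
    ZMod.card_units_eq_totient, ZMod.card_units_eq_totient,
    Nat.totient_prime hp, Nat.totient_prime hq]

theorem stmt3 (p q e k : ℕ) (hp : p.Prime) (hq : q.Prime) (hpq : p ≠ q)
    (he : Nat.Coprime e (Nat.totient (p * q))) (hk : 0 < k) :
    (Nat.card {x : ℕ // x < p * q ∧ Nat.Coprime x (p * q) ∧
        x ^ e ^ k ≡ x [MOD p * q] ∧
        ∀ j, 0 < j → j < k → ¬ x ^ e ^ j ≡ x [MOD p * q]} : ℤ) =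
      ∑ d ∈ k.divisors, (ArithmeticFunction.moebius (k / d)) *
        (Nat.gcd (e ^ d - 1) (p - 1) : ℤ) * (Nat.gcd (e ^ d - 1) (q - 1) : ℤ) := by
  classical
  haveI := Fact.mk hp; haveI := Fact.mk hq
  set n := p * q with hn
  haveI : NeZero n := ⟨Nat.mul_ne_zero hp.pos.ne' hq.pos.ne'⟩
  -- e is positive
  have he0 : 0 < e := by
    rcases Nat.eq_zero_or_pos e with rfl | h
    · exfalso
      have ht : Nat.totient n = 1 := Nat.coprime_zero_left _ |>.mp he
      have hco : Nat.Coprime p q := (Nat.coprime_primes hp hq).mpr hpq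
      rw [hn, Nat.totient_mul hco, Nat.totient_prime hp, Nat.totient_prime hq] at ht
      have h1 : p - 1 ∣ 1 := ⟨q - 1, ht.symm⟩
      have h2 : q - 1 ∣ 1 := ⟨p - 1, by rw [mul_comm] at ht; exact ht.symm⟩
      have := hp.two_le; have := hq.two_le
      have := Nat.le_of_dvd one_pos h1
      have := Nat.le_of_dvd one_pos h2
      omega
    · exact h
  have hej : ∀ j : ℕ, 1 ≤ e ^ j := fun j => Nat.one_le_pow _ _ he0
  -- the multiplicative order function
  have hcop : ∀ u : (ZMod n)ˣ, e.Coprime (orderOf u) := by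
    intro u
    refine he.coprime_dvd_right ?_
    have := orderOf_dvd_card (x := u)
    rwa [ZMod.card_units_eq_totient] at this
  set r : (ZMod n)ˣ → ℕ := fun u => orderOf (ZMod.unitOfCoprime e (hcop u)) with hr
  have hrpos : ∀ u, 0 < r u := by
    intro u
    haveI : NeZero (orderOf u) := ⟨(orderOf_pos u).ne'⟩
    exact orderOf_pos _
  -- key equivalence
  have key : ∀ (u : (ZMod n)ˣ) (j : ℕ), (u ^ e ^ j = u ↔ r u ∣ j) := by
    intro u j
    have h1 : e ^ j = (e ^ j - 1) + 1 := (Nat.succ_pred_eq_of_pos (hej j)).symm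
    rw [h1, pow_succ, mul_eq_right, ← orderOf_dvd_iff_pow_eq_one,
      ← Nat.modEq_iff_dvd' (hej j)]
    have hsymm : (1 ≡ e ^ j [MOD orderOf u]) ↔ e ^ j ≡ 1 [MOD orderOf u] :=
      ⟨Nat.ModEq.symm, Nat.ModEq.symm⟩
    rw [hsymm, ← ZMod.natCast_eq_natCast_iff]
    push_cast
    rw [show ((e : ZMod (orderOf u))) =
        ((ZMod.unitOfCoprime e (hcop u) : (ZMod (orderOf u))ˣ) : ZMod (orderOf u)) from
        (ZMod.coe_unitOfCoprime e (hcop u)).symm,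
      ← Units.val_pow_eq_pow_val, Units.val_eq_one, orderOf_dvd_iff_pow_eq_one]
  -- exactness
  have exact_iff : ∀ u : (ZMod n)ˣ,
      ((u ^ e ^ k = u ∧ ∀ j, 0 < j → j < k → ¬ u ^ e ^ j = u) ↔ r u = k) := by
    intro u
    constructor
    · rintro ⟨h1, h2⟩
      rw [key] at h1
      rcases lt_or_eq_of_le (Nat.le_of_dvd hk h1) with hlt | heq
      · exact absurd ((key u (r u)).mpr dvd_rfl) (h2 _ (hrpos u) hlt)
      · exact heq
    · rintro rfl
      refine ⟨(key u _).mpr dvd_rfl, fun j hj1 hj2 hdvd => ?_⟩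
      exact absurd (Nat.le_of_dvd hj1 ((key u j).mp hdvd)) (not_le.mpr hj2)
  -- transfer from ℕ-subtype to units subtype
  have base : ∀ (x : ℕ) (hx : x.Coprime n) (m : ℕ),
      (x ^ m ≡ x [MOD n] ↔ (ZMod.unitOfCoprime x hx) ^ m = ZMod.unitOfCoprime x hx) := by
    intro x hx m
    rw [Units.ext_iff, Units.val_pow_eq_pow_val, ZMod.coe_unitOfCoprime,
      ← Nat.cast_pow, ZMod.natCast_eq_natCast_iff]
  have card1 : Nat.card {x : ℕ // x < n ∧ Nat.Coprime x n ∧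
        x ^ e ^ k ≡ x [MOD n] ∧ ∀ j, 0 < j → j < k → ¬ x ^ e ^ j ≡ x [MOD n]}
      = Nat.card {u : (ZMod n)ˣ // r u = k} := by
    refine Nat.card_congr ?_
    refine { toFun := fun x => ⟨ZMod.unitOfCoprime x.1 x.2.2.1, ?_⟩
             invFun := fun u => ⟨(u.1 : ZMod n).val, ZMod.val_lt _,
               ZMod.val_coe_unit_coprime u.1, ?_⟩
             left_inv := ?_, right_inv := ?_ }
    · obtain ⟨x, hlt, hcx, h1, h2⟩ := x
      rw [← exact_iff]
      exact ⟨(base x hcx _).mp h1, fun j hj1 hj2 hdvd =>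
        (h2 j hj1 hj2) ((base x hcx _).mpr hdvd)⟩
    · obtain ⟨u, hu⟩ := u
      have huval : ZMod.unitOfCoprime ((u : ZMod n).val) (ZMod.val_coe_unit_coprime u) = u :=
        Units.ext (by simp [ZMod.coe_unitOfCoprime, ZMod.natCast_rightInverse (u : ZMod n)])
      have := (exact_iff u).mpr hu
      constructor
      · rw [base _ (ZMod.val_coe_unit_coprime u), huval]; exact this.1
      · intro j hj1 hj2 hc
        exact this.2 j hj1 hj2 (by rwa [base _ (ZMod.val_coe_unit_coprime u), huval] at hc)
    · rintro ⟨x, hlt, hcx, hrest⟩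
      exact Subtype.ext (by simp [ZMod.coe_unitOfCoprime, ZMod.val_natCast_of_lt hlt])
    · rintro ⟨u, hu⟩
      exact Subtype.ext (Units.ext (by
        simp [ZMod.coe_unitOfCoprime, ZMod.natCast_rightInverse (u : ZMod n)]))
  -- counting function
  set f : ℕ → ℤ := fun d => (Nat.card {u : (ZMod n)ˣ // r u = d} : ℤ) with hf
  set g : ℕ → ℤ := fun d =>
    ((Nat.gcd (e ^ d - 1) (p - 1) : ℤ) * (Nat.gcd (e ^ d - 1) (q - 1) : ℤ)) with hg
  have hFd : ∀ d > 0, ∑ i ∈ d.divisors, f i = g d := by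
    intro d hd
    have hcard_filter : ∀ i : ℕ, Nat.card {u : (ZMod n)ˣ // r u = i}
        = (Finset.univ.filter fun u : (ZMod n)ˣ => r u = i).card := by
      intro i; rw [Nat.card_eq_fintype_card, Fintype.card_subtype]
    have hsum : ∑ i ∈ d.divisors,
        (Finset.univ.filter fun u : (ZMod n)ˣ => r u = i).card
        = (Finset.univ.filter fun u : (ZMod n)ˣ => r u ∣ d).card := by
      rw [Finset.card_eq_sum_card_fiberwise (f := r)
        (t := d.divisors) (fun u hu => Nat.mem_divisors.mpr
          ⟨(Finset.mem_filter.mp hu).2, hd.ne'⟩)]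
      refine Finset.sum_congr rfl fun i hi => ?_
      congr 1
      ext u
      simp only [Finset.mem_filter, Finset.mem_univ, true_and]
      exact ⟨fun h => ⟨h ▸ (Nat.mem_divisors.mp hi).1, h⟩, fun h => h.2⟩
    have hF : (Finset.univ.filter fun u : (ZMod n)ˣ => r u ∣ d).card
        = Nat.card {u : (ZMod n)ˣ // u ^ (e ^ d - 1) = 1} := by
      rw [Nat.card_eq_fintype_card, Fintype.card_subtype]
      congr 1
      ext u
      simp only [Finset.mem_filter, Finset.mem_univ, true_and]
      rw [← key u d]
      have h1 : e ^ d = (e ^ d - 1) + 1 := (Nat.succ_pred_eq_of_pos (hej d)).symm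
      constructor
      · intro h; rw [h1, pow_succ, mul_eq_right] at h; exact h
      · intro h; rw [h1, pow_succ, mul_eq_right]; exact h
    have := aux_F_count p q hp hq hpq (e ^ d - 1)
    rw [hg]
    simp only [hf]
    rw [← Nat.cast_sum]
    rw [show (∑ i ∈ d.divisors, Nat.card {u : (ZMod n)ˣ // r u = i})
        = Nat.gcd (e ^ d - 1) (p - 1) * Nat.gcd (e ^ d - 1) (q - 1) by
      rw [← this, ← hF, ← hsum]
      exact Finset.sum_congr rfl fun i _ => hcard_filter i]
    push_cast
    ring
  -- Möbius inversion
  have hmob := (ArithmeticFunction.sum_eq_iff_sum_smul_moebius_eq.mp hFd) k hk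
  rw [Nat.sum_divisorsAntidiagonal' (f := fun a b => (ArithmeticFunction.moebius a : ℤ) • g b)]
    at hmob
  rw [card1]
  rw [show (Nat.card {u : (ZMod n)ˣ // r u = k} : ℤ) = f k from rfl, ← hmob]
  refine Finset.sum_congr rfl fun i _ => ?_
  simp only [hg, zsmul_eq_mul, Int.cast_id]
  ring
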